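/- For p > 1, the quantity π_p defined by the integral 2∫₀^{(p-1)^{1/p}} dt/(1 - t^p/(p-1))^{1/p} equals 2π(p-1)^{1/p}/(p sin(π/p)). -/

import Mathlib

open Real intervalIntegral

open MeasureTheory Set in
/-- The value of the real Beta-type integral `∫ x in 0..1, x^(1/p-1) (1-x)^(-1/p)`. -/
theorem beta_aux (p : ℝ) (hp : 1 < p) :
    ∫ x in (0:ℝ)..1, x ^ (1/p - 1) * (1 - x) ^ (-(1/p)) = Real.pi / Real.sin (Real.pi / p) := by
  have hp0 : 0 < p := lt_trans one_pos hp
  have h1p : 0 < 1/p := by positivity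
  have h1p1 : 1/p < 1 := by rw [div_lt_one hp0]; exact hp
  set u : ℂ := ((1/p : ℝ) : ℂ) with hu
  have hur : 0 < u.re := by rw [hu, Complex.ofReal_re]; exact h1p
  have hvr : 0 < (1 - u).re := by
    rw [Complex.sub_re, Complex.one_re, hu, Complex.ofReal_re]; linarith
  have key := Complex.Gamma_mul_Gamma_eq_betaIntegral hur hvr
  rw [add_sub_cancel, Complex.Gamma_one, one_mul, Complex.Gamma_mul_Gamma_one_sub] at key
  -- identify the complex beta integral with the real one
  have hbeta : Complex.betaIntegral u (1 - u)
      = ((∫ x in (0:ℝ)..1, x ^ (1/p - 1) * (1 - x) ^ (-(1/p)) : ℝ) : ℂ) := by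
    rw [Complex.betaIntegral, ← intervalIntegral.integral_ofReal]
    refine intervalIntegral.integral_congr fun x hx => ?_
    rw [uIcc_of_le (by norm_num : (0:ℝ) ≤ 1)] at hx
    have hx0 : (0:ℝ) ≤ x := hx.1
    have hx1 : (0:ℝ) ≤ 1 - x := by linarith [hx.2]
    have e1 : ((x ^ (1/p - 1) : ℝ) : ℂ) = (x:ℂ) ^ (u - 1) := by
      rw [Complex.ofReal_cpow hx0]
      congr 1
      rw [hu]; push_cast; ring
    have e2 : (((1 - x) ^ (-(1/p)) : ℝ) : ℂ) = (1 - (x:ℂ)) ^ (1 - u - 1) := by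
      rw [Complex.ofReal_cpow hx1]
      congr 1
      · push_cast; ring
      · rw [hu]; push_cast; ring
    rw [Complex.ofReal_mul, e1, e2]
  rw [hbeta] at key
  have hsin : Complex.sin (↑Real.pi * u) = ((Real.sin (Real.pi / p) : ℝ) : ℂ) := by
    rw [Complex.ofReal_sin]
    congr 1
    rw [hu]; push_cast; ring
  rw [hsin] at key
  have : ((Real.pi / Real.sin (Real.pi / p) : ℝ) : ℂ)
      = ((∫ x in (0:ℝ)..1, x ^ (1/p - 1) * (1 - x) ^ (-(1/p)) : ℝ) : ℂ) := by
    rw [← key]; push_cast; ring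
  exact_mod_cast this.symm

open MeasureTheory Set in
theorem pi_p_formula (p : ℝ) (hp : 1 < p) :
    2 * ∫ t in (0:ℝ)..((p - 1) ^ (1/p)), (1 - t ^ p / (p - 1)) ^ (-(1/p)) =
      2 * Real.pi * (p - 1) ^ (1/p) / (p * Real.sin (Real.pi / p)) := by
  have hp0 : 0 < p := lt_trans one_pos hp
  have hp1 : 0 < p - 1 := by linarith
  set c : ℝ := (p - 1) ^ (1/p) with hc_def
  have hc : 0 < c := Real.rpow_pos_of_pos hp1 _
  have hcp : c ^ p = p - 1 := by
    rw [hc_def, ← Real.rpow_mul hp1.le, one_div, inv_mul_cancel₀ hp0.ne', Real.rpow_one]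
  have h1p : 0 < 1/p := by positivity
  have h1p1 : 1/p < 1 := by rw [div_lt_one hp0]; exact hp
  have hsin : 0 < Real.sin (Real.pi / p) :=
    Real.sin_pos_of_pos_of_lt_pi (by positivity) (div_lt_self Real.pi_pos hp)
  -- the substitution map and its derivative
  set f : ℝ → ℝ := fun t => t ^ p / (p - 1) with hf_def
  set f' : ℝ → ℝ := fun t => p * t ^ (p - 1) / (p - 1) with hf'_def
  set g : ℝ → ℝ := fun x => x ^ (1/p - 1) * (1 - x) ^ (-(1/p)) with hg_def
  set g₀ : ℝ → ℝ := fun t => (1 - t ^ p / (p - 1)) ^ (-(1/p)) with hg₀_def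
  have hf0 : f 0 = 0 := by simp [hf_def, Real.zero_rpow hp0.ne']
  have hfc : f c = 1 := by simp [hf_def, hcp, div_self hp1.ne']
  -- key pointwise computation
  have key : ∀ t : ℝ, 0 < t → f' t * g (f t) = p / c * g₀ t := by
    intro t ht
    have h1 : t ^ (p-1) * t ^ (1-p) = 1 := by
      rw [← Real.rpow_add ht]; norm_num
    have h2 : (p-1) * (p-1) ^ (1/p-1) = c := by
      conv_rhs => rw [hc_def, show (1/p : ℝ) = 1 + (1/p - 1) by ring]
      rw [Real.rpow_add hp1, Real.rpow_one]
    have h3 : (t ^ p / (p-1)) ^ (1/p - 1) = t ^ (1-p) / (p-1) ^ (1/p-1) := by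
      rw [Real.div_rpow (Real.rpow_nonneg ht.le _) hp1.le, ← Real.rpow_mul ht.le]
      congr 1
      field_simp
    have hcne : c ≠ 0 := hc.ne'
    have hpm : ((p:ℝ)-1) ^ (1/p-1) ≠ 0 := (Real.rpow_pos_of_pos hp1 _).ne'
    have hpm1 : ((p:ℝ)-1) ≠ 0 := hp1.ne'
    have h5 : p * t ^ (p - 1) / (p - 1) * (t ^ (1 - p) / (p - 1) ^ (1 / p - 1)) = p / c := by
      rw [← h2]
      field_simp
      linear_combination h1
    calc f' t * g (f t)
        = p * t ^ (p - 1) / (p - 1) * (t ^ (1 - p) / (p - 1) ^ (1 / p - 1)) *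
            (1 - t ^ p / (p - 1)) ^ (-(1 / p)) := by
          simp only [hf'_def, hf_def, hg_def]
          rw [h3]; ring
      _ = p / c * g₀ t := by rw [h5]
  -- integrability of g on (0,1)
  have hg_cont_Ioo : ContinuousOn g (Ioo (0:ℝ) 1) := by
    intro x hx
    have hx0 : x ≠ 0 := hx.1.ne'
    have hx1 : (1:ℝ) - x ≠ 0 := by have := hx.2; intro h; linarith [sub_eq_zero.mp h]
    apply ContinuousAt.continuousWithinAt
    exact (Real.continuousAt_rpow_const x _ (Or.inl hx0)).mul
      (((Real.continuousAt_rpow_const (1-x) _ (Or.inl hx1)).comp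
        ((continuous_const.sub continuous_id).continuousAt)))
  have hg_int_Ioo : IntegrableOn g (Ioo (0:ℝ) 1) := by
    have hmaj : IntervalIntegrable
        (fun x : ℝ => 2 ^ (1/p) * x ^ (1/p - 1) + 2 ^ (1 - 1/p) * (1 - x) ^ (-(1/p)))
        volume 0 1 := by
      have hA : IntervalIntegrable (fun x : ℝ => x ^ (1/p - 1)) volume 0 1 :=
        intervalIntegral.intervalIntegrable_rpow' (by linarith)
      have hB : IntervalIntegrable (fun x : ℝ => (1 - x) ^ (-(1/p))) volume 0 1 := by
        have := (intervalIntegral.intervalIntegrable_rpow'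
          (r := -(1/p)) (by linarith) (a := 0) (b := 1)).comp_sub_left 1
        simpa using this.symm
      exact (hA.const_mul _).add (hB.const_mul _)
    have hmaj' : IntegrableOn
        (fun x : ℝ => 2 ^ (1/p) * x ^ (1/p - 1) + 2 ^ (1 - 1/p) * (1 - x) ^ (-(1/p)))
        (Ioo (0:ℝ) 1) := by
      have := (intervalIntegrable_iff_integrableOn_Icc_of_le (by norm_num : (0:ℝ) ≤ 1)).mp hmaj
      exact this.mono_set Ioo_subset_Icc_self
    refine hmaj'.integrable.mono (hg_cont_Ioo.aestronglyMeasurable measurableSet_Ioo) ?_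
    refine (ae_restrict_iff' measurableSet_Ioo).mpr (ae_of_all _ fun x hx => ?_)
    have hx0 : 0 < x := hx.1
    have hx1 : 0 < 1 - x := by linarith [hx.2]
    have hgnn : 0 ≤ g x := by
      simp only [hg_def]
      exact mul_nonneg (Real.rpow_nonneg hx0.le _) (Real.rpow_nonneg hx1.le _)
    have hMnn : 0 ≤ 2 ^ (1/p) * x ^ (1/p - 1) + 2 ^ (1 - 1/p) * (1 - x) ^ (-(1/p)) := by
      have := Real.rpow_nonneg hx0.le (1/p-1)
      have := Real.rpow_nonneg hx1.le (-(1/p))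
      positivity
    rw [Real.norm_eq_abs, Real.norm_eq_abs, abs_of_nonneg hgnn, abs_of_nonneg hMnn]
    rcases le_or_gt x (1/2) with hhalf | hhalf
    · have hb : (1 - x) ^ (-(1/p)) ≤ (1/2 : ℝ) ^ (-(1/p)) :=
        Real.rpow_le_rpow_of_nonpos (by norm_num) (by linarith) (by linarith)
      have hb2 : ((1:ℝ)/2) ^ (-(1/p)) = 2 ^ (1/p) := by
        rw [show ((1:ℝ)/2) = 2⁻¹ by norm_num, ← Real.rpow_neg_one (2:ℝ),
          ← Real.rpow_mul (by norm_num)]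
        norm_num
      have : g x ≤ x ^ (1/p - 1) * (2 : ℝ) ^ (1/p) := by
        simp only [hg_def]
        exact mul_le_mul_of_nonneg_left (hb.trans_eq hb2) (Real.rpow_nonneg hx0.le _)
      refine this.trans ?_
      have := Real.rpow_nonneg hx1.le (-(1/p))
      have h2p : (0:ℝ) ≤ 2 ^ (1 - 1/p) := Real.rpow_nonneg (by norm_num) _
      nlinarith [Real.rpow_nonneg hx0.le (1/p-1)]
    · have hb : x ^ (1/p - 1) ≤ (1/2 : ℝ) ^ (1/p - 1) :=
        Real.rpow_le_rpow_of_nonpos (by norm_num) (by linarith) (by linarith)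
      have hb2 : ((1:ℝ)/2) ^ (1/p - 1) = 2 ^ (1 - 1/p) := by
        rw [show ((1:ℝ)/2) = 2⁻¹ by norm_num, ← Real.rpow_neg_one (2:ℝ),
          ← Real.rpow_mul (by norm_num)]
        norm_num
      have : g x ≤ (2:ℝ) ^ (1 - 1/p) * (1 - x) ^ (-(1/p)) := by
        simp only [hg_def]
        rw [← hb2]
        exact mul_le_mul_of_nonneg_right hb (Real.rpow_nonneg hx1.le _)
      refine this.trans ?_
      have h2p : (0:ℝ) ≤ 2 ^ (1/p) := Real.rpow_nonneg (by norm_num) _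
      nlinarith [Real.rpow_nonneg hx0.le (1/p-1)]
  have hg_int_Icc : IntegrableOn g (Icc (0:ℝ) 1) := by
    rw [integrableOn_Icc_iff_integrableOn_Ioc, integrableOn_Ioc_iff_integrableOn_Ioo]
    exact hg_int_Ioo
  -- integrability of g₀ on [0,c]
  have hbase_lb : ∀ t ∈ Icc (0:ℝ) c, (c - t)/c ≤ 1 - t ^ p / (p - 1) := by
    intro t ht
    have ht0 : 0 ≤ t := ht.1
    have htc : t ≤ c := ht.2
    have htp : t ^ p ≤ c ^ (p-1) * t := by
      have e1 : t ^ p = t ^ (p-1) * t := by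
        have hne : (p - 1) + 1 ≠ 0 := by intro h; apply hp0.ne'; linarith
        conv_lhs => rw [show p = (p-1) + 1 by ring]
        rw [Real.rpow_add' ht0 hne, Real.rpow_one]
      rw [e1]
      exact mul_le_mul_of_nonneg_right (Real.rpow_le_rpow ht0 htc (by linarith)) ht0
    have e2 : c ^ (p-1) = (p-1)/c := by
      rw [Real.rpow_sub hc, hcp, Real.rpow_one]
    rw [e2] at htp
    have : t ^ p / (p-1) ≤ t / c := by
      rw [div_le_div_iff₀ hp1 hc]
      calc t ^ p * c ≤ (p-1)/c * t * c := by nlinarith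
        _ = t * (p-1) := by field_simp
    have : 1 - t ^ p/(p-1) ≥ 1 - t/c := by linarith
    calc (c-t)/c = 1 - t/c := by field_simp
      _ ≤ _ := this
  have hg₀_cont : ContinuousOn g₀ (Ico (0:ℝ) c) := by
    intro t ht
    have hbpos : 0 < 1 - t ^ p / (p - 1) := by
      have := hbase_lb t ⟨ht.1, ht.2.le⟩
      have : 0 < (c - t)/c := by
        apply div_pos _ hc; linarith [ht.2]
      linarith [hbase_lb t ⟨ht.1, ht.2.le⟩]
    apply ContinuousAt.continuousWithinAt
    have hbc : ContinuousAt (fun t : ℝ => 1 - t ^ p / (p - 1)) t :=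
      continuousAt_const.sub
        ((Real.continuousAt_rpow_const t p (Or.inr hp0.le)).div_const _)
    exact hbc.rpow_const (Or.inl hbpos.ne')
  have hg₀_int : IntegrableOn g₀ (Icc (0:ℝ) c) := by
    rw [integrableOn_Icc_iff_integrableOn_Ico]
    have hmaj : IntervalIntegrable (fun t : ℝ => c ^ (1/p) * (c - t) ^ (-(1/p))) volume 0 c := by
      have := (intervalIntegral.intervalIntegrable_rpow'
        (r := -(1/p)) (by linarith) (a := 0) (b := c)).comp_sub_left c
      simpa using (this.symm.const_mul _)
    have hmaj' : IntegrableOn (fun t : ℝ => c ^ (1/p) * (c - t) ^ (-(1/p))) (Ico (0:ℝ) c) := by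
      have := (intervalIntegrable_iff_integrableOn_Icc_of_le hc.le).mp hmaj
      exact this.mono_set Ico_subset_Icc_self
    refine hmaj'.integrable.mono (hg₀_cont.aestronglyMeasurable measurableSet_Ico) ?_
    refine (ae_restrict_iff' measurableSet_Ico).mpr (ae_of_all _ fun t ht => ?_)
    have hb := hbase_lb t ⟨ht.1, ht.2.le⟩
    have hlb : 0 < (c - t)/c := div_pos (by linarith [ht.2]) hc
    have hle : g₀ t ≤ ((c - t)/c) ^ (-(1/p)) := by
      simp only [hg₀_def]
      exact Real.rpow_le_rpow_of_nonpos hlb hb (by linarith)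
    have hrw : ((c - t)/c) ^ (-(1/p)) = c ^ (1/p) * (c - t) ^ (-(1/p)) := by
      rw [Real.div_rpow (by linarith [ht.2]) hc.le, Real.rpow_neg hc.le,
        div_eq_mul_inv, inv_inv, mul_comm]
    have hg₀nn : 0 ≤ g₀ t := by
      simp only [hg₀_def]
      exact Real.rpow_nonneg (by linarith [hlb.le.trans hb]) _
    have hMnn : 0 ≤ c ^ (1/p) * (c - t) ^ (-(1/p)) :=
      mul_nonneg (Real.rpow_nonneg hc.le _) (Real.rpow_nonneg (by linarith [ht.2]) _)
    rw [Real.norm_eq_abs, Real.norm_eq_abs, abs_of_nonneg hg₀nn, abs_of_nonneg hMnn]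
    rw [← hrw]; exact hle
  -- the substitution
  have hmain : (∫ t in (0:ℝ)..c, f' t • g (f t)) = ∫ x in (0:ℝ)..1, g x := by
    have h := intervalIntegral.integral_comp_smul_deriv''' (a := 0) (b := c)
      (f := f) (f' := f') (g := g) ?_ ?_ ?_ ?_ ?_
    · rw [hf0, hfc] at h; exact h
    · -- continuity of f on [[0,c]]
      intro t _
      apply ContinuousAt.continuousWithinAt
      apply ContinuousAt.div_const
      exact (Real.continuousAt_rpow_const t p (Or.inr hp0.le))
    · -- derivative
      intro x hx
      rw [min_eq_left hc.le, max_eq_right hc.le] at hx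
      exact ((Real.hasDerivAt_rpow_const (p := p) (Or.inr hp.le)).div_const
        (p-1)).hasDerivWithinAt
    · -- continuity of g on the image of the open interval
      rw [min_eq_left hc.le, max_eq_right hc.le]
      refine hg_cont_Ioo.mono ?_
      rintro x ⟨t, ht, rfl⟩
      constructor
      · simp only [hf_def]
        exact div_pos (Real.rpow_pos_of_pos ht.1 _) hp1
      · simp only [hf_def]
        rw [div_lt_one hp1, ← hcp]
        exact Real.rpow_lt_rpow ht.1.le ht.2 hp0
    · -- integrability of g on image of [[0,c]]
      refine hg_int_Icc.mono_set ?_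
      rintro x ⟨t, ht, rfl⟩
      rw [uIcc_of_le hc.le] at ht
      constructor
      · simp only [hf_def]
        exact div_nonneg (Real.rpow_nonneg ht.1 _) hp1.le
      · simp only [hf_def]
        rw [div_le_one hp1, ← hcp]
        exact Real.rpow_le_rpow ht.1 ht.2 hp0.le
    · -- integrability of the substituted integrand
      rw [uIcc_of_le hc.le, integrableOn_Icc_iff_integrableOn_Ioc]
      have hint : IntegrableOn (fun t => p / c * g₀ t) (Ioc (0:ℝ) c) :=
        (hg₀_int.mono_set Ioc_subset_Icc_self).const_mul _
      refine hint.congr ?_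
      refine (ae_restrict_iff' measurableSet_Ioc).mpr (ae_of_all _ fun t ht => ?_)
      show p / c * g₀ t = f' t • (g ∘ f) t
      rw [Function.comp_apply, smul_eq_mul, key t ht.1]
  -- put everything together
  have hcongr : (∫ t in (0:ℝ)..c, f' t • g (f t)) = ∫ t in (0:ℝ)..c, p / c * g₀ t := by
    refine intervalIntegral.integral_congr_ae ?_
    refine ae_of_all _ fun t ht => ?_
    rw [uIoc_of_le hc.le] at ht
    rw [smul_eq_mul, key t ht.1]
  have hB := beta_aux p hp
  have hBg : (∫ x in (0:ℝ)..1, g x) = Real.pi / Real.sin (Real.pi / p) := hB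
  rw [hcongr, intervalIntegral.integral_const_mul, hBg] at hmain
  have hI : (∫ t in (0:ℝ)..c, g₀ t) = c / p * (Real.pi / Real.sin (Real.pi / p)) := by
    have hcne : c ≠ 0 := hc.ne'
    have hpne : p ≠ 0 := hp0.ne'
    rw [← hmain]
    field_simp
  calc 2 * ∫ t in (0:ℝ)..c, (1 - t ^ p / (p - 1)) ^ (-(1/p))
      = 2 * ∫ t in (0:ℝ)..c, g₀ t := rfl
    _ = 2 * (c / p * (Real.pi / Real.sin (Real.pi / p))) := by rw [hI]
    _ = 2 * Real.pi * c / (p * Real.sin (Real.pi / p)) := by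
        field_simp
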